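/- Let R be a Noetherian local ring and A, B two m×n matrices over R, viewed as R-linear maps R^n → R^m. Then im(A) = im(B) as submodules of R^m if and only if there exists g ∈ GL_n(R) with A·g = B. -/

import Mathlib

open IsLocalRing

/-- Splitting equivalence for a surjective linear map over a field (given a right inverse). -/
private noncomputable def splitEquiv {k V W : Type*} [Field k] [AddCommGroup V] [Module k V]
    [AddCommGroup W] [Module k W] (f : V →ₗ[k] W) (s : W →ₗ[k] V)
    (hs : ∀ w, f (s w) = w) : V ≃ₗ[k] (LinearMap.ker f × W) where
  toFun v := (⟨v - s (f v), by simp [LinearMap.mem_ker, hs]⟩, f v)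
  map_add' x y := by
    refine Prod.ext (Subtype.ext ?_) (by simp)
    simp only [Prod.mk_add_mk, Submodule.coe_add, map_add]
    abel
  map_smul' c x := by
    refine Prod.ext (Subtype.ext ?_) (by simp)
    simp [smul_sub]
  invFun p := ↑p.1 + s p.2
  left_inv v := by simp
  right_inv p := by
    have h0 : f ↑p.1 = 0 := LinearMap.mem_ker.mp p.1.2
    refine Prod.ext (Subtype.ext ?_) ?_ <;> simp [h0, hs]

/-- Over a field, any two surjections from a fixed f.d. space differ by an automorphism. -/
private theorem aux_field_equiv {k V W : Type*} [Field k] [AddCommGroup V] [Module k V]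
    [AddCommGroup W] [Module k W] [FiniteDimensional k V] [FiniteDimensional k W]
    (f g : V →ₗ[k] W) (hf : Function.Surjective f) (hg : Function.Surjective g) :
    ∃ e : V ≃ₗ[k] V, ∀ v, f (e v) = g v := by
  obtain ⟨s, hs⟩ := f.exists_rightInverse_of_surjective (LinearMap.range_eq_top.mpr hf)
  obtain ⟨t, ht⟩ := g.exists_rightInverse_of_surjective (LinearMap.range_eq_top.mpr hg)
  have hs' : ∀ w, f (s w) = w := fun w => by
    simpa using LinearMap.congr_fun hs w
  have ht' : ∀ w, g (t w) = w := fun w => by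
    simpa using LinearMap.congr_fun ht w
  let Ef := splitEquiv f s hs'
  let Eg := splitEquiv g t ht'
  have hdim : Module.finrank k (LinearMap.ker g) = Module.finrank k (LinearMap.ker f) := by
    have h1 := Ef.finrank_eq
    have h2 := Eg.finrank_eq
    rw [Module.finrank_prod] at h1 h2
    omega
  let φ : LinearMap.ker g ≃ₗ[k] LinearMap.ker f := LinearEquiv.ofFinrankEq _ _ hdim
  refine ⟨Eg ≪≫ₗ (φ.prodCongr (LinearEquiv.refl k W)) ≪≫ₗ Ef.symm, fun v => ?_⟩
  have key : ∀ p : LinearMap.ker f × W, f (Ef.symm p) = p.2 := by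
    intro p
    have h2 : (Ef (Ef.symm p)).2 = p.2 := by rw [Ef.apply_symm_apply]
    simpa [Ef, splitEquiv] using h2
  simp only [LinearEquiv.trans_apply]
  rw [key]
  rfl

/-- The componentwise reduction map to the residue field, as a semilinear map. -/
private noncomputable def redMap (R : Type*) [CommRing R] [IsLocalRing R] (n : ℕ) :
    (Fin n → R) →ₛₗ[IsLocalRing.residue R] (Fin n → IsLocalRing.ResidueField R) where
  toFun v i := IsLocalRing.residue R (v i)
  map_add' x y := by funext i; simp
  map_smul' c v := by funext i; simp

private instance (R : Type*) [CommRing R] [IsLocalRing R] :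
    RingHomSurjective (IsLocalRing.residue R) :=
  ⟨Ideal.Quotient.mk_surjective⟩

private theorem redMap_mulVec {R : Type*} [CommRing R] [IsLocalRing R] {m n : ℕ}
    (M : Matrix (Fin m) (Fin n) R) (v : Fin n → R) :
    redMap R m (M.mulVec v) = (M.map (IsLocalRing.residue R)).mulVec (redMap R n v) := by
  funext i
  simp [redMap, Matrix.mulVec, dotProduct, map_sum]

private theorem exists_factor {R : Type*} [CommRing R] {m n p : ℕ}
    (A : Matrix (Fin m) (Fin n) R) (B : Matrix (Fin m) (Fin p) R)
    (h : LinearMap.range B.mulVecLin ≤ LinearMap.range A.mulVecLin) :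
    ∃ C : Matrix (Fin n) (Fin p) R, A * C = B := by
  classical
  have hcol : ∀ j, ∃ c : Fin n → R, A.mulVec c = fun i => B i j := by
    intro j
    obtain ⟨c, hc⟩ := h (LinearMap.mem_range_self B.mulVecLin (Pi.single j 1))
    refine ⟨c, ?_⟩
    have : A.mulVec c = B.mulVec (Pi.single j 1) := hc
    rw [this, Matrix.mulVec_single]
    simp
    rfl
  choose c hc using hcol
  refine ⟨Matrix.of fun i j => c j i, ?_⟩
  ext i j
  have := congrFun (hc j) i
  simpa [Matrix.mul_apply, Matrix.mulVec, dotProduct] using this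

/-- Let `R` be a Noetherian local ring and `A, B` two `m×n` matrices
over `R`, viewed as `R`-linear maps `R^n → R^m`. Then `im(A) = im(B)` as submodules of
`R^m` if and only if there exists `g ∈ GL_n(R)` with `A·g = B`. -/
theorem stmt_2 (R : Type*) [CommRing R] [IsNoetherianRing R] [IsLocalRing R]
    (m n : ℕ) (A B : Matrix (Fin m) (Fin n) R) :
    LinearMap.range A.mulVecLin = LinearMap.range B.mulVecLin ↔
      ∃ g : Matrix.GeneralLinearGroup (Fin n) R,
        A * (g : Matrix (Fin n) (Fin n) R) = B := by
  classical
  constructor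
  · intro h
    set π := IsLocalRing.residue R with hπ
    set k := IsLocalRing.ResidueField R with hk
    -- Step 1: factorizations
    obtain ⟨C, hC⟩ := exists_factor A B h.ge
    obtain ⟨D, hD⟩ := exists_factor B A h.le
    have hACD : A * (C * D) = A := by rw [← Matrix.mul_assoc, hC, hD]
    -- The subspace L ⊆ k^n : reduction of ker A
    set L : Submodule k (Fin n → k) :=
      (LinearMap.ker A.mulVecLin).map (redMap R n) with hL
    -- columns of 1 - C̄D̄ lie in L
    set K : Matrix (Fin n) (Fin n) R := 1 - C * D with hK
    have hAK : A * K = 0 := by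
      rw [hK, Matrix.mul_sub, Matrix.mul_one, hACD, sub_self]
    have hKcol : ∀ j, (fun i => K i j) ∈ LinearMap.ker A.mulVecLin := by
      intro j
      rw [LinearMap.mem_ker]
      have : A.mulVec (fun i => K i j) = fun i => (A * K) i j := by
        funext i
        simp [Matrix.mulVec, dotProduct, Matrix.mul_apply]
      rw [Matrix.mulVecLin_apply, this, hAK]
      funext i
      simp
    have hKbar : K.map π = 1 - (C.map π) * (D.map π) := by
      rw [hK, Matrix.map_sub _ (fun a b => map_sub π a b), Matrix.map_one _ (map_zero π) (map_one π),
        Matrix.map_mul]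
    -- range of (K.map π) lands in L
    have hKrange : LinearMap.range (K.map π).mulVecLin ≤ L := by
      rw [Matrix.range_mulVecLin]
      refine Submodule.span_le.mpr ?_
      rintro _ ⟨j, rfl⟩
      exact ⟨fun i => K i j, hKcol j, rfl⟩
    -- q ∘ C̄ is surjective
    have hsurj : Function.Surjective (L.mkQ ∘ₗ (C.map π).mulVecLin) := by
      intro y
      obtain ⟨v, rfl⟩ := L.mkQ_surjective y
      refine ⟨(D.map π).mulVec v, ?_⟩
      have hmem : (K.map π).mulVec v ∈ L :=
        hKrange (LinearMap.mem_range_self _ v)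
      have heq : (C.map π).mulVec ((D.map π).mulVec v) - v = -((K.map π).mulVec v) := by
        rw [hKbar, Matrix.sub_mulVec, Matrix.one_mulVec, Matrix.mulVec_mulVec]
        abel
      simp only [LinearMap.comp_apply, Matrix.mulVecLin_apply]
      rw [Submodule.mkQ_apply, Submodule.mkQ_apply]
      exact (Submodule.Quotient.eq L).mpr (heq ▸ L.neg_mem hmem)
    -- apply the field lemma
    obtain ⟨e, he⟩ := aux_field_equiv L.mkQ (L.mkQ ∘ₗ (C.map π).mulVecLin)
      L.mkQ_surjective (hsurj)
    set X : Matrix (Fin n) (Fin n) k := LinearMap.toMatrix' (e : (Fin n → k) →ₗ[k] (Fin n → k))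
      with hX
    have hXmul : ∀ v, X.mulVec v = e v := by
      intro v
      rw [← Matrix.toLin'_apply, hX, Matrix.toLin'_toMatrix']
      rfl
    -- det X is a unit
    have hXdet : IsUnit X.det := by
      have h1 : X * LinearMap.toMatrix' (e.symm : (Fin n → k) →ₗ[k] (Fin n → k)) = 1 := by
        rw [hX, ← LinearMap.toMatrix'_comp]
        have : (e : (Fin n → k) →ₗ[k] (Fin n → k)) ∘ₗ
            (e.symm : (Fin n → k) →ₗ[k] (Fin n → k)) = LinearMap.id := by
          ext v
          simp
        rw [this, LinearMap.toMatrix'_id]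
      exact IsUnit.of_mul_eq_one _ (by rw [← Matrix.det_mul, h1, Matrix.det_one])
    -- columns of X - C̄ lie in L
    have hcolL : ∀ j, (fun i => X i j - (C.map π) i j) ∈ L := by
      intro j
      have hq : L.mkQ (X.mulVec (Pi.single j 1)) = L.mkQ ((C.map π).mulVec (Pi.single j 1)) := by
        rw [hXmul]
        simpa using he (Pi.single j 1)
      have hmem : X.mulVec (Pi.single j 1) - (C.map π).mulVec (Pi.single j 1) ∈ L := by
        rw [← Submodule.ker_mkQ L, LinearMap.mem_ker, map_sub, hq, sub_self]
      have : (fun i => X i j - (C.map π) i j) =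
          X.mulVec (Pi.single j 1) - (C.map π).mulVec (Pi.single j 1) := by
        funext i
        simp [Matrix.mulVec_single]
      rw [this]
      exact hmem
    -- lift the columns
    have hlift : ∀ j, ∃ w : Fin n → R, w ∈ LinearMap.ker A.mulVecLin ∧
        redMap R n w = fun i => X i j - (C.map π) i j := by
      intro j
      obtain ⟨w, hw, hw2⟩ := hcolL j
      exact ⟨w, hw, hw2⟩
    choose w hwker hwred using hlift
    set N : Matrix (Fin n) (Fin n) R := Matrix.of fun i j => w j i with hN
    have hAN : A * N = 0 := by
      ext i j
      have := congrFun (LinearMap.mem_ker.mp (hwker j)) i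
      simpa [Matrix.mul_apply, Matrix.mulVec, dotProduct, hN] using this
    have hNmap : N.map π = X - C.map π := by
      ext i j
      have := congrFun (hwred j) i
      simpa [Matrix.map_apply, hN, redMap] using this
    -- the invertible matrix
    set C' : Matrix (Fin n) (Fin n) R := C + N with hC'
    have hAC' : A * C' = B := by
      rw [hC', Matrix.mul_add, hC, hAN, add_zero]
    have hC'map : C'.map π = X := by
      rw [hC', Matrix.map_add _ (fun a b => map_add π a b), hNmap]
      abel
    have hC'det : IsUnit C'.det := by
      by_contra hcon
      have hmem : C'.det ∈ maximalIdeal R := (IsLocalRing.mem_maximalIdeal _).mpr hcon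
      have h0 : π C'.det = 0 := Ideal.Quotient.eq_zero_iff_mem.mpr hmem
      have : X.det = 0 := by
        rw [← hC'map, ← RingHom.mapMatrix_apply, ← RingHom.map_det, h0]
      exact hXdet.ne_zero this
    obtain ⟨u, hu⟩ := (Matrix.isUnit_iff_isUnit_det C').mpr hC'det
    exact ⟨u, by rw [hu]; exact hAC'⟩
  · rintro ⟨g, rfl⟩
    have hg : LinearMap.range ((g : Matrix (Fin n) (Fin n) R).mulVecLin) = ⊤ := by
      rw [LinearMap.range_eq_top]
      intro v
      refine ⟨((g⁻¹ : Matrix.GeneralLinearGroup (Fin n) R) :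
        Matrix (Fin n) (Fin n) R).mulVec v, ?_⟩
      rw [Matrix.mulVecLin_apply, Matrix.mulVec_mulVec]
      have : (g : Matrix (Fin n) (Fin n) R) *
          ((g⁻¹ : Matrix.GeneralLinearGroup (Fin n) R) : Matrix (Fin n) (Fin n) R) = 1 := by
        exact_mod_cast g.mul_inv
      rw [this, Matrix.one_mulVec]
    rw [Matrix.mulVecLin_mul, LinearMap.range_comp_of_range_eq_top _ hg]
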